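/- With γ < 0, β > 0, and Σ_{m≠0} ∫_L (Cᵐ)² γ dJ < 0 as above, the quadratic form G[{fₙ}] = Σ_{n≠0} ∫_L (β/γ) fₙ² dJ + 2πβ(Σ_{n≠0} ∫_L Cⁿ fₙ dJ)² is negative definite on the space of nonzero square-summable perturbation sequences if and only if 1 + 2π Σ_{m≠0} ∫_L (Cᵐ)² γ dJ > 0. -/

import Mathlib

open MeasureTheory

/-- Formal stability criterion: with `γ < 0`, `β > 0`, and
`A = Σ_{m≠0} ∫ (Cᵐ)² γ dJ < 0`, the quadratic form
`G[{fₙ}] = Σ_{n≠0} ∫ (β/γ) fₙ² + 2πβ (Σ_{n≠0} ∫ Cⁿ fₙ)²` is negative definite on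
nonzero admissible perturbation sequences iff `1 + 2πA > 0`. -/
theorem stmt_16 {L : Type*} [MeasureSpace L] (γ : L → ℝ) (C : ℤ → L → ℝ) (β : ℝ)
    (hγ : ∀ x, γ x < 0) (hβ : 0 < β)
    (hCint : ∀ n : ℤ, Integrable (fun x => (C n x) ^ 2 * γ x))
    (hCsum : Summable (fun n : {n : ℤ // n ≠ 0} => ∫ x, (C n.1 x) ^ 2 * γ x))
    (hA : (∑' n : {n : ℤ // n ≠ 0}, ∫ x, (C n.1 x) ^ 2 * γ x) < 0) :
    (∀ f : ℤ → L → ℝ,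
        (∀ n : ℤ, Integrable (fun x => (β / γ x) * (f n x) ^ 2)) →
        (∀ n : ℤ, Integrable (fun x => C n x * f n x)) →
        Summable (fun n : {n : ℤ // n ≠ 0} => ∫ x, (β / γ x) * (f n.1 x) ^ 2) →
        Summable (fun n : {n : ℤ // n ≠ 0} => ∫ x, C n.1 x * f n.1 x) →
        (∃ n : ℤ, n ≠ 0 ∧ ¬ (f n =ᵐ[(volume : Measure L)] 0)) →
        (∑' n : {n : ℤ // n ≠ 0}, ∫ x, (β / γ x) * (f n.1 x) ^ 2)
            + 2 * π * β * (∑' n : {n : ℤ // n ≠ 0}, ∫ x, C n.1 x * f n.1 x) ^ 2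
          < 0)
      ↔ 0 < 1 + 2 * π * ∑' m : {m : ℤ // m ≠ 0}, ∫ y, (C m.1 y) ^ 2 * γ y := by
  set A : ℝ := ∑' n : {n : ℤ // n ≠ 0}, ∫ x, (C n.1 x) ^ 2 * γ x with hAdef
  constructor
  · -- Forward: negative definiteness ⟹ 1 + 2πA > 0
    intro hG
    -- each term of A is nonpositive
    have hterm_nonpos : ∀ n : {n : ℤ // n ≠ 0}, (∫ x, (C n.1 x) ^ 2 * γ x) ≤ 0 := by
      intro n
      apply integral_nonpos
      intro x
      show (C n.1 x) ^ 2 * γ x ≤ 0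
      have := hγ x
      nlinarith [sq_nonneg (C n.1 x)]
    -- some term is strictly negative
    have hex : ∃ n : {n : ℤ // n ≠ 0}, (∫ x, (C n.1 x) ^ 2 * γ x) < 0 := by
      by_contra h
      push_neg at h
      have hz : ∀ n : {n : ℤ // n ≠ 0}, (∫ x, (C n.1 x) ^ 2 * γ x) = 0 :=
        fun n => le_antisymm (hterm_nonpos n) (h n)
      have : A = 0 := by
        rw [hAdef]
        simp [hz]
      linarith
    obtain ⟨n₀, hn₀⟩ := hex
    -- test sequence f n x = C n x * γ x
    set f : ℤ → L → ℝ := fun n x => C n x * γ x with hfdef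
    have heq1 : ∀ n : ℤ, (fun x => (β / γ x) * (f n x) ^ 2)
        = fun x => β * ((C n x) ^ 2 * γ x) := by
      intro n
      funext x
      have hne : γ x ≠ 0 := (hγ x).ne
      field_simp [hfdef]
      ring
    have heq2 : ∀ n : ℤ, (fun x => C n x * f n x) = fun x => (C n x) ^ 2 * γ x := by
      intro n
      funext x
      simp only [hfdef]
      ring
    have hInt1 : ∀ n : ℤ, Integrable (fun x => (β / γ x) * (f n x) ^ 2) := by
      intro n
      rw [heq1 n]
      exact (hCint n).const_mul β
    have hInt2 : ∀ n : ℤ, Integrable (fun x => C n x * f n x) := by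
      intro n
      rw [heq2 n]
      exact hCint n
    have hint_eq1 : ∀ n : {n : ℤ // n ≠ 0},
        (∫ x, (β / γ x) * (f n.1 x) ^ 2) = β * ∫ x, (C n.1 x) ^ 2 * γ x := by
      intro n
      rw [show (fun x => (β / γ x) * (f n.1 x) ^ 2) = fun x => β * ((C n.1 x) ^ 2 * γ x)
        from heq1 n.1, integral_const_mul]
    have hint_eq2 : ∀ n : {n : ℤ // n ≠ 0},
        (∫ x, C n.1 x * f n.1 x) = ∫ x, (C n.1 x) ^ 2 * γ x := by
      intro n
      rw [show (fun x => C n.1 x * f n.1 x) = fun x => (C n.1 x) ^ 2 * γ x from heq2 n.1]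
    have hSum1 : Summable (fun n : {n : ℤ // n ≠ 0} => ∫ x, (β / γ x) * (f n.1 x) ^ 2) := by
      simp only [hint_eq1]
      exact hCsum.mul_left β
    have hSum2 : Summable (fun n : {n : ℤ // n ≠ 0} => ∫ x, C n.1 x * f n.1 x) := by
      simp only [hint_eq2]
      exact hCsum
    have hwit : ∃ n : ℤ, n ≠ 0 ∧ ¬ (f n =ᵐ[(volume : Measure L)] 0) := by
      refine ⟨n₀.1, n₀.2, fun hcontra => ?_⟩
      have : (fun x => (C n₀.1 x) ^ 2 * γ x) =ᵐ[(volume : Measure L)] 0 := by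
        filter_upwards [hcontra] with x hx
        have : C n₀.1 x * γ x = 0 := hx
        have hne : γ x ≠ 0 := (hγ x).ne
        have hC0 : C n₀.1 x = 0 := by
          rcases mul_eq_zero.1 this with h | h
          · exact h
          · exact absurd h hne
        simp [hC0]
      have := integral_eq_zero_of_ae this
      linarith
    have hGC := hG f hInt1 hInt2 hSum1 hSum2 hwit
    rw [show (∑' n : {n : ℤ // n ≠ 0}, ∫ x, (β / γ x) * (f n.1 x) ^ 2) = β * A by
        simp only [hint_eq1]; rw [tsum_mul_left],
      show (∑' n : {n : ℤ // n ≠ 0}, ∫ x, C n.1 x * f n.1 x) = A by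
        simp only [hint_eq2]; exact hAdef.symm] at hGC
    -- β A + 2πβA² < 0, βA < 0 ⟹ 1 + 2πA > 0
    by_contra hcon
    push_neg at hcon
    have hβA : β * A < 0 := mul_neg_of_pos_of_neg hβ hA
    have h1 : 0 ≤ (β * A) * (1 + 2 * π * A) :=
      mul_nonneg_of_nonpos_of_nonpos hβA.le hcon
    nlinarith [h1]
  · -- Backward: 1 + 2πA > 0 ⟹ negative definiteness
    intro hApos f hInt1 hInt2 hSum1 hSum2 hwit
    obtain ⟨n₀, hn₀, hfne⟩ := hwit
    set b : {n : ℤ // n ≠ 0} → ℝ := fun n => ∫ x, (β / γ x) * (f n.1 x) ^ 2 with hbdef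
    set s : {n : ℤ // n ≠ 0} → ℝ := fun n => ∫ x, C n.1 x * f n.1 x with hsdef
    set B : ℝ := ∑' n : {n : ℤ // n ≠ 0}, b n with hBdef
    set S : ℝ := ∑' n : {n : ℤ // n ≠ 0}, s n with hSdef
    -- each b n ≤ 0
    have hb_nonpos : ∀ n : {n : ℤ // n ≠ 0}, b n ≤ 0 := by
      intro n
      apply integral_nonpos
      intro x
      show (β / γ x) * (f n.1 x) ^ 2 ≤ 0
      have h1 : β / γ x ≤ 0 := div_nonpos_of_nonneg_of_nonpos hβ.le (hγ x).le
      exact mul_nonpos_of_nonpos_of_nonneg h1 (sq_nonneg _)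
    -- strict negativity at the witness
    have hbn₀ : b (⟨n₀, hn₀⟩ : {n : ℤ // n ≠ 0}) < 0 := by
      have hpos : 0 < ∫ x, -((β / γ x) * (f n₀ x) ^ 2) := by
        rw [integral_pos_iff_support_of_nonneg_ae]
        · have hμ : (volume : Measure L) {x | f n₀ x ≠ 0} ≠ 0 := by
            intro h
            exact hfne (by rwa [Filter.EventuallyEq, ae_iff])
          have hset : Function.support (fun x => -((β / γ x) * (f n₀ x) ^ 2))
              = {x | f n₀ x ≠ 0} := by
            ext x
            simp only [Function.mem_support, Set.mem_setOf_eq, neg_ne_zero, mul_ne_zero_iff]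
            constructor
            · intro ⟨_, h2⟩
              exact fun hf => h2 (by simp [hf])
            · intro hf
              refine ⟨div_ne_zero hβ.ne' (hγ x).ne, ?_⟩
              exact pow_ne_zero _ hf
          rw [hset]
          exact pos_iff_ne_zero.2 hμ
        · filter_upwards with x
          have h1 : β / γ x ≤ 0 := div_nonpos_of_nonneg_of_nonpos hβ.le (hγ x).le
          have := mul_nonpos_of_nonpos_of_nonneg h1 (sq_nonneg (f n₀ x))
          simpa using neg_nonneg.2 this
        · exact (hInt1 n₀).neg
      have : (∫ x, -((β / γ x) * (f n₀ x) ^ 2)) = - ∫ x, (β / γ x) * (f n₀ x) ^ 2 :=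
        integral_neg _
      simp only [hbdef]
      linarith [this ▸ hpos]
    -- B < 0
    have hBneg : B < 0 := by
      have h1 : -(b ⟨n₀, hn₀⟩) ≤ ∑' n : {n : ℤ // n ≠ 0}, -(b n) :=
        Summable.le_tsum hSum1.neg _ (fun j _ => neg_nonneg.2 (hb_nonpos j))
      rw [tsum_neg] at h1
      have h2 : B ≤ b ⟨n₀, hn₀⟩ := by
        simp only [hBdef]; linarith
      linarith [hbn₀]
    -- split on the sign of π
    rcases le_or_gt π 0 with hπ | hπ
    · nlinarith [mul_nonneg (mul_nonneg (neg_nonneg.2 hπ) hβ.le) (sq_nonneg S), hBneg]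
    · -- main case: π > 0
      set P : ℝ := -A with hPdef
      have hP : 0 < P := by simp only [hPdef]; linarith
      set Q : ℝ := -B / β with hQdef
      have hQ : 0 < Q := div_pos (by linarith) hβ
      have hβQ : β * Q = -B := by
        rw [hQdef]; field_simp
      -- key estimate: for every ε > 0, |S| ≤ (ε/2) P + (1/(2βε)) (-B)
      have key : ∀ ε : ℝ, 0 < ε →
          |S| ≤ (ε / 2) * P + (1 / (2 * β * ε)) * (-B) := by
        intro ε hε
        -- the majorant function and its properties
        have hpt : ∀ (n : {n : ℤ // n ≠ 0}) (x : L),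
            |C n.1 x * f n.1 x| ≤ (ε / 2) * (-((C n.1 x) ^ 2 * γ x))
              + (1 / (2 * β * ε)) * (-((β / γ x) * (f n.1 x) ^ 2)) := by
          intro n x
          have hgx : 0 < -γ x := neg_pos.2 (hγ x)
          have hne : γ x ≠ 0 := (hγ x).ne
          set t : ℝ := ε * (-γ x) with htdef
          have ht : 0 < t := mul_pos hε hgx
          have e1 : (ε / 2) * (-((C n.1 x) ^ 2 * γ x))
              + (1 / (2 * β * ε)) * (-((β / γ x) * (f n.1 x) ^ 2))
              = (t * (C n.1 x) ^ 2 + (f n.1 x) ^ 2 / t) / 2 := by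
            rw [htdef]
            field_simp
          rw [e1, abs_mul]
          have e2 : t * (C n.1 x) ^ 2 + (f n.1 x) ^ 2 / t - 2 * (|C n.1 x| * |f n.1 x|)
              = (t * |C n.1 x| - |f n.1 x|) ^ 2 / t := by
            field_simp
            rw [← sq_abs (C n.1 x), ← sq_abs (f n.1 x)]
            ring
          have e3 : 0 ≤ (t * |C n.1 x| - |f n.1 x|) ^ 2 / t := by positivity
          linarith [e2 ▸ e3]
        -- the majorant is integrable, with explicit integral
        have hi1 : ∀ n : {n : ℤ // n ≠ 0},
            Integrable (fun x => (ε / 2) * (-((C n.1 x) ^ 2 * γ x))) := by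
          intro n
          simpa using ((hCint n.1).neg.const_mul (ε / 2))
        have hi2 : ∀ n : {n : ℤ // n ≠ 0},
            Integrable (fun x => (1 / (2 * β * ε)) * (-((β / γ x) * (f n.1 x) ^ 2))) := by
          intro n
          simpa using ((hInt1 n.1).neg.const_mul (1 / (2 * β * ε)))
        have hφint : ∀ n : {n : ℤ // n ≠ 0}, Integrable (fun x =>
            (ε / 2) * (-((C n.1 x) ^ 2 * γ x))
              + (1 / (2 * β * ε)) * (-((β / γ x) * (f n.1 x) ^ 2))) :=
          fun n => (hi1 n).add (hi2 n)
        have hφval : ∀ n : {n : ℤ // n ≠ 0}, (∫ x,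
            ((ε / 2) * (-((C n.1 x) ^ 2 * γ x))
              + (1 / (2 * β * ε)) * (-((β / γ x) * (f n.1 x) ^ 2))))
            = (ε / 2) * (-(∫ x, (C n.1 x) ^ 2 * γ x)) + (1 / (2 * β * ε)) * (-(b n)) := by
          intro n
          rw [integral_add (hi1 n) (hi2 n),
            integral_const_mul, integral_const_mul, integral_neg, integral_neg]
        -- per-term bound on |s n|
        have hsbound : ∀ n : {n : ℤ // n ≠ 0},
            |s n| ≤ (ε / 2) * (-(∫ x, (C n.1 x) ^ 2 * γ x)) + (1 / (2 * β * ε)) * (-(b n)) := by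
          intro n
          have h1 : |s n| ≤ ∫ x, |C n.1 x * f n.1 x| := by
            simpa only [Real.norm_eq_abs] using
              norm_integral_le_integral_norm (μ := (volume : Measure L))
                (fun x => C n.1 x * f n.1 x)
          have h2 : (∫ x, |C n.1 x * f n.1 x|) ≤ ∫ x,
              ((ε / 2) * (-((C n.1 x) ^ 2 * γ x))
                + (1 / (2 * β * ε)) * (-((β / γ x) * (f n.1 x) ^ 2))) :=
            integral_mono (hInt2 n.1).abs (hφint n) (fun x => hpt n x)
          calc |s n| ≤ ∫ x, |C n.1 x * f n.1 x| := h1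
            _ ≤ _ := h2
            _ = _ := hφval n
        -- summability of the majorant sequence
        have hmajsum : Summable (fun n : {n : ℤ // n ≠ 0} =>
            (ε / 2) * (-(∫ x, (C n.1 x) ^ 2 * γ x)) + (1 / (2 * β * ε)) * (-(b n))) :=
          (hCsum.neg.mul_left _).add (hSum1.neg.mul_left _)
        have habs_sum : Summable (fun n : {n : ℤ // n ≠ 0} => |s n|) :=
          Summable.of_nonneg_of_le (fun n => abs_nonneg _) hsbound hmajsum
        have hS1 : |S| ≤ ∑' n : {n : ℤ // n ≠ 0}, |s n| := by
          simpa only [Real.norm_eq_abs] using norm_tsum_le_tsum_norm (f := s)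
            (by simpa only [Real.norm_eq_abs] using habs_sum)
        have hS2 : (∑' n : {n : ℤ // n ≠ 0}, |s n|)
            ≤ ∑' n : {n : ℤ // n ≠ 0},
              ((ε / 2) * (-(∫ x, (C n.1 x) ^ 2 * γ x)) + (1 / (2 * β * ε)) * (-(b n))) :=
          Summable.tsum_le_tsum hsbound habs_sum hmajsum
        have hS3 : (∑' n : {n : ℤ // n ≠ 0},
              ((ε / 2) * (-(∫ x, (C n.1 x) ^ 2 * γ x)) + (1 / (2 * β * ε)) * (-(b n))))
            = (ε / 2) * P + (1 / (2 * β * ε)) * (-B) := by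
          rw [Summable.tsum_add (hCsum.neg.mul_left _) (hSum1.neg.mul_left _),
            tsum_mul_left, tsum_mul_left, tsum_neg, tsum_neg]
        linarith [hS1, hS2, hS3 ▸ hS2]
      -- choose the optimal ε and conclude S² ≤ P Q
      set ε₀ : ℝ := Real.sqrt (Q / P) with hε₀def
      have hε₀ : 0 < ε₀ := Real.sqrt_pos.2 (div_pos hQ hP)
      have hε₀sq : ε₀ ^ 2 = Q / P := Real.sq_sqrt (div_pos hQ hP).le
      have h2 : ε₀ ^ 2 * P = Q := by
        rw [hε₀sq]; field_simp
      have hk := key ε₀ hε₀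
      have hk' : |S| ≤ (ε₀ / 2) * P + Q / (2 * ε₀) := by
        have e : (1 / (2 * β * ε₀)) * (-B) = Q / (2 * ε₀) := by
          rw [← hβQ]
          field_simp
        linarith [e ▸ hk]
      have hk2 : |S| * (2 * ε₀) ≤ ε₀ ^ 2 * P + Q := by
        have h := mul_le_mul_of_nonneg_right hk' (by positivity : (0:ℝ) ≤ 2 * ε₀)
        have e : ((ε₀ / 2) * P + Q / (2 * ε₀)) * (2 * ε₀) = ε₀ ^ 2 * P + Q := by
          field_simp
        linarith [e ▸ h]
      rw [h2] at hk2
      have hk3 : |S| * ε₀ ≤ Q := by linarith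
      have hfin : S ^ 2 * ε₀ ^ 2 ≤ Q ^ 2 := by
        have h := mul_self_le_mul_self (by positivity) hk3
        calc S ^ 2 * ε₀ ^ 2 = (|S| * ε₀) * (|S| * ε₀) := by
              rw [← sq_abs S]; ring
          _ ≤ Q * Q := h
          _ = Q ^ 2 := by ring
      have hSPQ : S ^ 2 ≤ P * Q := by
        rw [hε₀sq] at hfin
        have h4 : S ^ 2 * (Q / P) * P ≤ Q ^ 2 * P :=
          mul_le_mul_of_nonneg_right hfin hP.le
        have e4 : S ^ 2 * (Q / P) * P = S ^ 2 * Q := by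
          field_simp
        rw [e4] at h4
        have : S ^ 2 * Q ≤ (P * Q) * Q := by rw [show (P * Q) * Q = Q ^ 2 * P by ring]; exact h4
        exact le_of_mul_le_mul_right this hQ
      -- conclude
      have e5 : 2 * π * β * (P * Q) = 2 * π * A * B := by
        rw [hPdef, hQdef]
        field_simp
      have h6 : 2 * π * β * S ^ 2 ≤ 2 * π * A * B := by
        rw [← e5]
        exact mul_le_mul_of_nonneg_left hSPQ (by positivity)
      have h7 : B * (1 + 2 * π * A) < 0 := mul_neg_of_neg_of_pos hBneg hApos
      nlinarith [h6, h7]
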